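/- arXiv:1010.3142 — 6 statements merged into one kernel-verified Lean document; each statement's English description precedes it below -/
import Mathlib

section
/- Let b ≥ 2 be an integer and φ as defined (φ(s) = (2/3)·e·b·e^{−bs} for s > 1/b, φ(s) = (2/3)·b²·s for 0 < s ≤ 1/b, φ(s) = 0 for s ≤ 0). Then for all s, s' > 0, φ(s+s')/φ(s) ≥ e^{−b s'}. -/
open Real

/-- The piecewise density φ with parameter b. -/
noncomputable def phi (b : ℤ) (s : ℝ) : ℝ :=
  if s ≤ 0 then 0
  else if s ≤ 1 / b then (2 / 3) * (b : ℝ) ^ 2 * s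
  else (2 / 3) * Real.exp 1 * (b : ℝ) * Real.exp (-(b : ℝ) * s)

theorem phi_ratio_ge (b : ℤ) (hb : 2 ≤ b) :
    ∀ s s' : ℝ, 0 < s → 0 < s' →
      phi b (s + s') / phi b s ≥ Real.exp (-(b : ℝ) * s') := by
  intro s s' hs hs'
  have hB : (2:ℝ) ≤ (b:ℝ) := by exact_mod_cast hb
  have hB0 : (0:ℝ) < (b:ℝ) := by linarith
  have hexp : Real.exp (-(b:ℝ) * (s + s')) =
      Real.exp (-(b:ℝ) * s) * Real.exp (-(b:ℝ) * s') := by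
    rw [← Real.exp_add]; ring_nf
  have he1 : (0:ℝ) < Real.exp (-(b:ℝ) * s') := Real.exp_pos _
  have he2 : (0:ℝ) < Real.exp (-(b:ℝ) * s) := Real.exp_pos _
  have hle1 : Real.exp (-(b:ℝ) * s') ≤ 1 := by
    apply Real.exp_le_one_iff.mpr
    nlinarith
  have hA : ¬ (s + s' ≤ 0) := by linarith
  have hA' : ¬ (s ≤ 0) := by linarith
  simp only [phi, if_neg hA, if_neg hA']
  split_ifs with h1 h2 h3
  · -- both linear
    rw [ge_iff_le, le_div_iff₀ (by positivity)]
    nlinarith [mul_le_mul_of_nonneg_right hle1 (show (0:ℝ) ≤ 2/3*(b:ℝ)^2*s by positivity)]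
  · -- s + s' ≤ 1/b but s > 1/b : impossible
    exfalso; linarith
  · -- s ≤ 1/b, s + s' > 1/b
    have hbs : s * (b:ℝ) ≤ 1 := (le_div_iff₀ hB0).mp h3
    have key : (b:ℝ) * s ≤ Real.exp 1 * Real.exp (-(b:ℝ) * s) := by
      have : Real.exp 1 * Real.exp (-(b:ℝ) * s) = Real.exp (1 - (b:ℝ) * s) := by
        rw [← Real.exp_add]; ring_nf
      rw [this]
      have h3 := Real.add_one_le_exp (1 - (b:ℝ) * s)
      linarith
    rw [ge_iff_le, le_div_iff₀ (by positivity), hexp]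
    nlinarith [mul_le_mul_of_nonneg_left key (le_of_lt he1)]
  · -- both exponential
    rw [ge_iff_le, le_div_iff₀ (by positivity), hexp]
    have h0 : (0:ℝ) < Real.exp 1 := Real.exp_pos 1
    nlinarith
end

section
/- Let b ≥ 2 be an integer and φ as defined, with Φ(s) = ∫_{−∞}^s φ(s') ds'. Then the mean of Φ, namely ∫_0^∞ (1 − Φ(s)) ds, is at most 2/b. -/
open Real MeasureTheory

/-- The CDF of φ. -/
noncomputable def Phi (b : ℤ) (s : ℝ) : ℝ := ∫ s' in Set.Iic s, phi b s'

open Set Filter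

section Aux

variable {b : ℤ} (hb : 2 ≤ b)

lemma bpos (hb : 2 ≤ b) : (0:ℝ) < (b:ℝ) := by exact_mod_cast lt_of_lt_of_le (by norm_num) hb

lemma phi_meas (b : ℤ) : Measurable (phi b) := by
  unfold phi
  refine Measurable.ite (measurableSet_le measurable_id measurable_const) measurable_const ?_
  refine Measurable.ite (measurableSet_le measurable_id measurable_const) ?_ ?_
  · exact measurable_id.const_mul _
  · exact ((measurable_id.const_mul _).exp).const_mul _

lemma phi_eq_zero (b : ℤ) {s : ℝ} (h : s ≤ 0) : phi b s = 0 := if_pos h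

lemma phi_eq_lin (hb : 2 ≤ b) {s : ℝ} (h0 : 0 < s) (h1 : s ≤ 1 / (b:ℝ)) :
    phi b s = (2 / 3) * (b : ℝ) ^ 2 * s := by
  rw [phi, if_neg (not_le.2 h0), if_pos h1]

lemma phi_eq_exp (hb : 2 ≤ b) {s : ℝ} (h1 : 1 / (b:ℝ) < s) :
    phi b s = (2 / 3) * Real.exp 1 * (b : ℝ) * Real.exp (-(b : ℝ) * s) := by
  have h0 : 0 < s := lt_trans (by positivity) h1
  rw [phi, if_neg (not_le.2 h0), if_neg (not_le.2 h1)]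

lemma integrableOn_phi_Iic (hb : 2 ≤ b) (s : ℝ) : IntegrableOn (phi b) (Set.Iic s) := by
  have hb0 : (0:ℝ) < (b:ℝ) := bpos hb
  have h1 : IntegrableOn (phi b) (Set.Iic 0) := by
    apply IntegrableOn.congr_fun (integrableOn_zero :
      IntegrableOn (fun _ : ℝ => (0:ℝ)) (Set.Iic 0) volume) ?_ measurableSet_Iic
    intro x hx; exact (phi_eq_zero b hx).symm
  have h2 : IntegrableOn (phi b) (Set.Ioc 0 (1/(b:ℝ))) := by
    apply (Continuous.integrableOn_Ioc (by continuity :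
      Continuous fun s : ℝ => (2 / 3) * (b : ℝ) ^ 2 * s)).congr_fun ?_ measurableSet_Ioc
    intro x hx; exact (phi_eq_lin hb hx.1 hx.2).symm
  have h3 : IntegrableOn (phi b) (Set.Ioi (1/(b:ℝ))) := by
    apply IntegrableOn.congr_fun ((exp_neg_integrableOn_Ioi (1/(b:ℝ)) hb0).const_mul
      ((2 / 3) * Real.exp 1 * (b : ℝ)) : IntegrableOn _ _ _) ?_ measurableSet_Ioi
    intro x hx; exact (phi_eq_exp hb hx).symm
  have hall : Integrable (phi b) := by
    rw [← integrableOn_univ]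
    have : (Set.univ : Set ℝ) = Set.Iic 0 ∪ Set.Ioc 0 (1/(b:ℝ)) ∪ Set.Ioi (1/(b:ℝ)) := by
      rw [Set.Iic_union_Ioc_eq_Iic (by positivity), Set.Iic_union_Ioi]
    rw [this]
    exact (h1.union h2).union h3
  exact hall.integrableOn

lemma Phi_lin (hb : 2 ≤ b) {s : ℝ} (h0 : 0 ≤ s) (h1 : s ≤ 1 / (b:ℝ)) :
    Phi b s = (1/3) * (b:ℝ)^2 * s^2 := by
  rw [Phi, ← Set.Iic_union_Ioc_eq_Iic h0,
    setIntegral_union (Set.Iic_disjoint_Ioc le_rfl) measurableSet_Ioc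
      (integrableOn_phi_Iic hb 0) ((integrableOn_phi_Iic hb s).mono_set Set.Ioc_subset_Iic_self)]
  rw [setIntegral_congr_fun measurableSet_Iic (fun x hx => phi_eq_zero b hx), integral_zero,
    zero_add]
  rw [setIntegral_congr_fun measurableSet_Ioc
    (fun x hx => phi_eq_lin hb hx.1 (le_trans hx.2 h1))]
  rw [← intervalIntegral.integral_of_le h0]
  have hid : ∫ x in (0:ℝ)..s, x = (s^2 - 0^2)/2 := by
    open intervalIntegral in exact integral_id
  rw [_root_.intervalIntegral.integral_const_mul, hid]
  ring

lemma Phi_exp (hb : 2 ≤ b) {s : ℝ} (h1 : 1 / (b:ℝ) ≤ s) :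
    Phi b s = 1 - (2/3) * Real.exp (1 - (b:ℝ) * s) := by
  have hb0 : (0:ℝ) < (b:ℝ) := bpos hb
  have hbinv : 0 ≤ 1 / (b:ℝ) := by positivity
  rw [Phi, ← Set.Iic_union_Ioc_eq_Iic h1,
    setIntegral_union (Set.Iic_disjoint_Ioc le_rfl) measurableSet_Ioc
      (integrableOn_phi_Iic hb _) ((integrableOn_phi_Iic hb s).mono_set Set.Ioc_subset_Iic_self)]
  have hA : ∫ s' in Set.Iic (1/(b:ℝ)), phi b s' = 1/3 := by
    have := Phi_lin hb hbinv (le_refl (1/(b:ℝ)))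
    rw [Phi] at this
    rw [this]
    field_simp
  rw [hA]
  rw [setIntegral_congr_fun measurableSet_Ioc (fun x hx => phi_eq_exp hb hx.1)]
  rw [← intervalIntegral.integral_of_le h1]
  have hFTC : ∫ x in (1/(b:ℝ))..s, (2 / 3) * Real.exp 1 * (b : ℝ) * Real.exp (-(b : ℝ) * x)
      = (-(2/3) * Real.exp 1 * Real.exp (-(b:ℝ)*s)) - (-(2/3) * Real.exp 1 * Real.exp (-(b:ℝ)*(1/(b:ℝ)))) := by
    apply intervalIntegral.integral_eq_sub_of_hasDerivAt
    · intro x _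
      have h : HasDerivAt (fun x : ℝ => -(b:ℝ)*x) (-(b:ℝ)) x := by
        simpa using (hasDerivAt_id x).const_mul (-(b:ℝ))
      have := (h.exp.const_mul (-(2/3) * Real.exp 1))
      refine this.congr_deriv ?_
      ring
    · apply Continuous.intervalIntegrable
      continuity
  rw [hFTC]
  have hbb : -(b:ℝ) * (1/(b:ℝ)) = -1 := by field_simp
  rw [hbb]
  have he1 : Real.exp 1 * Real.exp (-1) = 1 := by
    rw [← Real.exp_add]; norm_num
  have he2 : Real.exp 1 * Real.exp (-(b:ℝ)*s) = Real.exp (1 - (b:ℝ)*s) := by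
    rw [← Real.exp_add]; ring_nf
  linear_combination (2/3) * he1 - (2/3) * he2

end Aux

theorem Phi_mean_le (b : ℤ) (hb : 2 ≤ b) :
    ∫ s in Set.Ioi (0 : ℝ), (1 - Phi b s) ≤ 2 / b := by
  have hb0 : (0:ℝ) < (b:ℝ) := bpos hb
  have hbinv : (0:ℝ) ≤ 1 / (b:ℝ) := by positivity
  -- integrands on the two pieces
  have hEq1 : Set.EqOn (fun s => 1 - Phi b s) (fun s => 1 - (1/3) * (b:ℝ)^2 * s^2)
      (Set.Ioc 0 (1/(b:ℝ))) := by
    intro x hx; simp only; rw [Phi_lin hb hx.1.le hx.2]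
  have hEq2 : Set.EqOn (fun s => 1 - Phi b s) (fun s => (2/3) * Real.exp (1 - (b:ℝ)*s))
      (Set.Ioi (1/(b:ℝ))) := by
    intro x hx; simp only; rw [Phi_exp hb (le_of_lt hx)]; ring
  have hInt1 : IntegrableOn (fun s => 1 - Phi b s) (Set.Ioc 0 (1/(b:ℝ))) := by
    apply (Continuous.integrableOn_Ioc (by continuity :
      Continuous fun s : ℝ => 1 - (1/3) * (b:ℝ)^2 * s^2)).congr_fun ?_ measurableSet_Ioc
    exact fun x hx => (hEq1 hx).symm
  have hInt2exp : IntegrableOn (fun s => (2/3) * Real.exp (1 - (b:ℝ)*s)) (Set.Ioi (1/(b:ℝ))) := by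
    have : IntegrableOn (fun s : ℝ => Real.exp (-(b:ℝ)*s)) (Set.Ioi (1/(b:ℝ))) :=
      exp_neg_integrableOn_Ioi _ hb0
    have h2 : IntegrableOn (fun s : ℝ => (2/3) * Real.exp 1 * Real.exp (-(b:ℝ)*s)) (Set.Ioi (1/(b:ℝ))) :=
      this.const_mul ((2/3) * Real.exp 1)
    apply IntegrableOn.congr_fun h2 ?_ measurableSet_Ioi
    intro x _
    simp only
    rw [mul_assoc, ← Real.exp_add]
    norm_num [sub_eq_add_neg]
  have hInt2 : IntegrableOn (fun s => 1 - Phi b s) (Set.Ioi (1/(b:ℝ))) :=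
    hInt2exp.congr_fun (fun x hx => (hEq2 hx).symm) measurableSet_Ioi
  rw [← Set.Ioc_union_Ioi_eq_Ioi hbinv,
    setIntegral_union (Set.Ioc_disjoint_Ioi le_rfl) measurableSet_Ioi hInt1 hInt2]
  have hI1 : ∫ s in Set.Ioc 0 (1/(b:ℝ)), (1 - Phi b s) = 1/(b:ℝ) - 1/(9*(b:ℝ)) := by
    rw [setIntegral_congr_fun measurableSet_Ioc hEq1, ← intervalIntegral.integral_of_le hbinv]
    have : ∫ x in (0:ℝ)..(1/(b:ℝ)), (1 - (1/3) * (b:ℝ)^2 * x^2)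
        = ((1/(b:ℝ)) - (1/3)*(b:ℝ)^2*((1/(b:ℝ))^3/3)) - (0 - (1/3)*(b:ℝ)^2*(0^3/3)) := by
      apply intervalIntegral.integral_eq_sub_of_hasDerivAt
        (f := fun x : ℝ => x - (1/3)*(b:ℝ)^2*(x^3/3))
      · intro x _
        have h1 : HasDerivAt (fun x : ℝ => x) 1 x := hasDerivAt_id x
        have h2 : HasDerivAt (fun x : ℝ => (1/3)*(b:ℝ)^2*(x^3/3)) ((1/3)*(b:ℝ)^2*x^2) x := by
          have := ((hasDerivAt_pow 3 x).div_const 3).const_mul ((1/3)*(b:ℝ)^2)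
          refine this.congr_deriv ?_
          push_cast; ring
        exact h1.sub h2
      · apply Continuous.intervalIntegrable; continuity
    rw [this]
    field_simp
    ring
  have hI2 : ∫ s in Set.Ioi (1/(b:ℝ)), (1 - Phi b s) = 2/(3*(b:ℝ)) := by
    rw [setIntegral_congr_fun measurableSet_Ioi hEq2]
    have hder : ∀ x ∈ Set.Ioi (1/(b:ℝ)),
        HasDerivAt (fun x : ℝ => -(2/(3*(b:ℝ))) * Real.exp (1 - (b:ℝ)*x))
          ((2/3) * Real.exp (1 - (b:ℝ)*x)) x := by
      intro x _
      have h : HasDerivAt (fun x : ℝ => 1 - (b:ℝ)*x) (-(b:ℝ)) x := by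
        simpa using ((hasDerivAt_id x).const_mul (b:ℝ)).const_sub 1
      have := h.exp.const_mul (-(2/(3*(b:ℝ))))
      refine this.congr_deriv ?_
      field_simp
    have htend : Tendsto (fun x : ℝ => -(2/(3*(b:ℝ))) * Real.exp (1 - (b:ℝ)*x)) atTop (nhds 0) := by
      have h1 : Tendsto (fun x : ℝ => 1 - (b:ℝ)*x) atTop atBot := by
        apply tendsto_atBot_add_const_left _ 1
        exact tendsto_neg_atTop_atBot.comp (tendsto_id.const_mul_atTop hb0)
      have h2 : Tendsto (fun x : ℝ => Real.exp (1 - (b:ℝ)*x)) atTop (nhds 0) :=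
        Real.tendsto_exp_atBot.comp h1
      have := h2.const_mul (-(2/(3*(b:ℝ))))
      simpa using this
    have hcont : ContinuousWithinAt (fun x : ℝ => -(2/(3*(b:ℝ))) * Real.exp (1 - (b:ℝ)*x))
        (Set.Ici (1/(b:ℝ))) (1/(b:ℝ)) :=
      (continuous_const.mul (Real.continuous_exp.comp (continuous_const.sub
        (continuous_const.mul continuous_id)))).continuousWithinAt
    have := integral_Ioi_of_hasDerivAt_of_tendsto hcont hder hInt2exp htend
    rw [this]
    have : -(b:ℝ) * (1/(b:ℝ)) = -1 := by field_simp
    rw [show (1 : ℝ) - (b:ℝ) * (1/(b:ℝ)) = 0 by field_simp; ring]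
    simp
  rw [hI1, hI2]
  have heq : 1/(b:ℝ) - 1/(9*(b:ℝ)) + 2/(3*(b:ℝ)) = 14/(9*(b:ℝ)) := by field_simp; ring
  rw [heq, div_le_div_iff₀ (by positivity) hb0]
  nlinarith [hb0]
end

section
/- Let b ≥ 2 be an integer and φ as defined. Then for all s > 0, φ(s) ≤ b·(1 − Φ(s)), where Φ(s) = ∫_{−∞}^s φ(s') ds'. -/
open Real MeasureTheory

lemma phi_int_Iic_zero (b : ℤ) : IntegrableOn (phi b) (Set.Iic 0) := by
  apply (integrableOn_zero (s := Set.Iic (0:ℝ))).congr_fun ?_ measurableSet_Iic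
  intro x hx
  simp only [Set.mem_Iic] at hx
  simp [phi, hx]

lemma int_Iic_zero (b : ℤ) : ∫ s' in Set.Iic (0:ℝ), phi b s' = 0 := by
  rw [MeasureTheory.setIntegral_congr_fun measurableSet_Iic
    (g := fun _ => (0:ℝ)) (fun x hx => by simp [phi, Set.mem_Iic.1 hx])]
  simp

lemma Phi_eq_of_le (b : ℤ) (hb : 2 ≤ b) {s : ℝ} (hs : 0 < s) (hs' : s ≤ 1 / b) :
    Phi b s = (1/3) * (b:ℝ)^2 * s^2 := by
  have hb0 : (0:ℝ) < b := by exact_mod_cast lt_of_lt_of_le (by norm_num) hb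
  have heq : Set.EqOn (phi b) (fun x => (2/3) * (b:ℝ)^2 * x) (Set.Ioc 0 s) := by
    intro x hx
    obtain ⟨hx0, hxs⟩ := hx
    simp only [phi]
    rw [if_neg (not_le.2 hx0), if_pos (hxs.trans hs')]
  have hint : IntegrableOn (fun x => (2/3) * (b:ℝ)^2 * x) (Set.Ioc 0 s) :=
    (continuous_const.mul continuous_id).integrableOn_Ioc
  unfold Phi
  rw [← Set.Iic_union_Ioc_eq_Iic hs.le,
    MeasureTheory.setIntegral_union (Set.Iic_disjoint_Ioc le_rfl) measurableSet_Ioc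
      (phi_int_Iic_zero b) (hint.congr_fun (fun x hx => (heq hx).symm) measurableSet_Ioc),
    int_Iic_zero, MeasureTheory.setIntegral_congr_fun measurableSet_Ioc heq,
    ← intervalIntegral.integral_of_le hs.le]
  rw [intervalIntegral.integral_const_mul, integral_id]
  ring

lemma Phi_eq_of_gt (b : ℤ) (hb : 2 ≤ b) {s : ℝ} (hs : 1 / b < s) :
    Phi b s = 1 - (2/3) * Real.exp 1 * Real.exp (-(b:ℝ) * s) := by
  have hb0 : (0:ℝ) < b := by exact_mod_cast lt_of_lt_of_le (by norm_num) hb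
  have hb1 : (0:ℝ) < 1 / b := by positivity
  have heq : Set.EqOn (phi b) (fun x => (2/3) * Real.exp 1 * (b:ℝ) * Real.exp (-(b:ℝ) * x))
      (Set.Ioc (1/(b:ℝ)) s) := by
    intro x hx
    obtain ⟨hx0, hxs⟩ := hx
    simp only [phi]
    rw [if_neg (not_le.2 (hb1.trans hx0)), if_neg (not_le.2 hx0)]
  have hcont : Continuous (fun x : ℝ => (2/3) * Real.exp 1 * (b:ℝ) * Real.exp (-(b:ℝ) * x)) := by
    continuity
  have hderiv : ∀ x ∈ Set.uIcc (1/(b:ℝ)) s,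
      HasDerivAt (fun y => -((2/3) * Real.exp 1 * Real.exp (-(b:ℝ) * y)))
        ((2/3) * Real.exp 1 * (b:ℝ) * Real.exp (-(b:ℝ) * x)) x := by
    intro x _
    have h1 : HasDerivAt (fun y : ℝ => -(b:ℝ) * y) (-(b:ℝ)) x := by
      simpa using (hasDerivAt_id x).const_mul (-(b:ℝ))
    have h2 := (h1.exp.const_mul ((2/3) * Real.exp 1)).neg
    exact h2.congr_deriv (by ring)
  have hIoc : ∫ s' in Set.Ioc (1/(b:ℝ)) s, phi b s'
      = (2/3) * Real.exp 1 * (Real.exp (-1) - Real.exp (-(b:ℝ) * s)) := by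
    rw [MeasureTheory.setIntegral_congr_fun measurableSet_Ioc heq,
      ← intervalIntegral.integral_of_le hs.le,
      intervalIntegral.integral_eq_sub_of_hasDerivAt hderiv (hcont.intervalIntegrable _ _)]
    have : -(b:ℝ) * (1/(b:ℝ)) = -1 := by field_simp
    rw [this]
    ring
  have hPhi1 : Phi b (1/(b:ℝ)) = 1/3 := by
    rw [Phi_eq_of_le b hb hb1 le_rfl]
    field_simp
  have hint : IntegrableOn (phi b) (Set.Ioc (1/(b:ℝ)) s) :=
    (hcont.integrableOn_Ioc).congr_fun (fun x hx => (heq hx).symm) measurableSet_Ioc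
  have hintIic : IntegrableOn (phi b) (Set.Iic (1/(b:ℝ))) := by
    rw [← Set.Iic_union_Ioc_eq_Iic hb1.le]
    apply (phi_int_Iic_zero b).union
    have heq2 : Set.EqOn (phi b) (fun x => (2/3) * (b:ℝ)^2 * x) (Set.Ioc 0 (1/(b:ℝ))) := by
      intro x hx
      obtain ⟨hx0, hxs⟩ := hx
      simp only [phi]
      rw [if_neg (not_le.2 hx0), if_pos hxs]
    exact ((continuous_const.mul continuous_id).integrableOn_Ioc).congr_fun
      (fun x hx => (heq2 hx).symm) measurableSet_Ioc
  unfold Phi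
  rw [← Set.Iic_union_Ioc_eq_Iic hs.le,
    MeasureTheory.setIntegral_union (Set.Iic_disjoint_Ioc le_rfl) measurableSet_Ioc
      hintIic hint]
  have : (∫ s' in Set.Iic (1/(b:ℝ)), phi b s') = 1/3 := hPhi1
  rw [this, hIoc, Real.exp_neg]
  have he : Real.exp 1 * (Real.exp 1)⁻¹ = 1 := mul_inv_cancel₀ (Real.exp_ne_zero 1)
  linear_combination (2/3) * he

theorem phi_le_b_mul_tail (b : ℤ) (hb : 2 ≤ b) :
    ∀ s : ℝ, 0 < s → phi b s ≤ (b : ℝ) * (1 - Phi b s) := by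
  intro s hs
  have hb0 : (0:ℝ) < b := by exact_mod_cast lt_of_lt_of_le (by norm_num) hb
  by_cases hcase : s ≤ 1 / b
  · rw [Phi_eq_of_le b hb hs hcase]
    have hphi : phi b s = (2/3) * (b:ℝ)^2 * s := by
      simp only [phi]
      rw [if_neg (not_le.2 hs), if_pos hcase]
    rw [hphi]
    have h1 : (b:ℝ) * s ≤ 1 := by
      rw [le_div_iff₀ hb0] at hcase
      linarith [hcase]
    nlinarith [mul_nonneg (mul_nonneg hb0.le (sub_nonneg.2 h1))
      (by nlinarith : (0:ℝ) ≤ 3 + (b:ℝ) * s)]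
  · push_neg at hcase
    rw [Phi_eq_of_gt b hb hcase]
    have hphi : phi b s = (2/3) * Real.exp 1 * (b:ℝ) * Real.exp (-(b:ℝ) * s) := by
      simp only [phi]
      rw [if_neg (not_le.2 hs), if_neg (not_le.2 hcase)]
    rw [hphi]
    ring_nf
    exact le_rfl
end

section
/- Let A(t) be the number of renewals by time t of a (possibly delayed) renewal process with interarrival times W(1), W(2), … where W(2), W(3), … are i.i.d. nonnegative with mean β > 0, and let Y(1), Y(2), … be i.i.d. random variables in [0,1] with mean m, independent of the W's. Then for any given ε ∈ (0,1] there is a constant C > 0, not depending on the distribution of Y(1), such that for all sufficiently large t, P(∑_{k=1}^{A(t)} Y(k) > (1+ε)·β^{−1}·m·t) ≤ e^{−C·m·t}. -/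
open MeasureTheory ProbabilityTheory Real Filter Topology
open scoped ENNReal NNReal

lemma aux_exp_neg_le {x : ℝ} (hx : 0 ≤ x) : Real.exp (-x) ≤ 1 - x + x ^ 2 := by
  have h1 : x + 1 ≤ Real.exp x := Real.add_one_le_exp x
  have hpos : (0:ℝ) < 1 + x := by linarith
  have h2 : Real.exp (-x) ≤ (1 + x)⁻¹ := by
    rw [Real.exp_neg]
    exact inv_anti₀ hpos (by linarith)
  have h3 : (1 + x)⁻¹ ≤ 1 - x + x ^ 2 := by
    rw [inv_le_iff_one_le_mul₀ hpos]
    nlinarith [pow_nonneg hx 3]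
  linarith

lemma aux_exp_convex {θ y : ℝ} (hy0 : 0 ≤ y) (hy1 : y ≤ 1) :
    Real.exp (θ * y) ≤ 1 + y * (Real.exp θ - 1) := by
  have h := convexOn_exp.2 (Set.mem_univ (0:ℝ)) (Set.mem_univ θ)
    (by linarith : (0:ℝ) ≤ 1 - y) hy0 (by ring)
  simp only [smul_eq_mul, mul_zero, zero_add, Real.exp_zero, mul_one] at h
  calc Real.exp (θ * y) = Real.exp (y * θ) := by rw [mul_comm]
    _ ≤ (1 - y) + y * Real.exp θ := h
    _ = 1 + y * (Real.exp θ - 1) := by ring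

lemma aux_exp_small {θ : ℝ} (h0 : 0 ≤ θ) (h1 : θ ≤ 1/2) :
    Real.exp θ ≤ 1 + θ + 2 * θ ^ 2 := by
  have hpos : (0:ℝ) < 1 - θ := by linarith
  have h2 : 1 - θ ≤ Real.exp (-θ) := by
    have := Real.add_one_le_exp (-θ); linarith
  have h3 : Real.exp θ ≤ (1 - θ)⁻¹ := by
    calc Real.exp θ = (Real.exp (-θ))⁻¹ := by rw [Real.exp_neg, inv_inv]
      _ ≤ (1 - θ)⁻¹ := inv_anti₀ hpos h2
  have h4 : (1 - θ)⁻¹ ≤ 1 + θ + 2 * θ ^ 2 := by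
    rw [inv_le_iff_one_le_mul₀ hpos]
    nlinarith [sq_nonneg θ]
  linarith

lemma aux_num0 (lam β ε I : ℝ) (hfact : lam * (β - β * (ε/16)) ≤ lam * I) :
    -(lam * I) + lam * (ε * β / 16) ≤ -(lam * β * (1 - ε/8)) := by linarith

lemma aux_num1 (lam t β ε : ℝ) (hlam : 0 < lam) (ht0 : 0 < t) (hβ : 0 < β)
    (hε0 : 0 < ε) (hε1 : ε ≤ 1) (hεt : 32 * β ≤ ε * t) :
    lam * t + lam * ε / 8 * t ≤ (1 + ε/2) * (1 - ε/8) * lam * t - lam * β * (1 - ε/8) := by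
  nlinarith [mul_le_mul_of_nonneg_left hεt hlam.le,
    mul_nonneg (mul_nonneg (mul_nonneg hlam.le ht0.le) hε0.le) (by linarith : (0:ℝ) ≤ 1 - ε),
    mul_nonneg (mul_nonneg hlam.le hβ.le) hε0.le]

lemma aux_num2 (ε u : ℝ) (hε0 : 0 < ε) (hε1 : ε ≤ 1) (hu0 : 0 < u) (hεu : 32 ≤ ε * u) :
    -(1+ε) * u + ((1 + ε/2) * u + 1) * (1 + ε/4) ≤ -(ε * u / 16) := by
  nlinarith [mul_nonneg (mul_nonneg hε0.le (by linarith : (0:ℝ) ≤ 1 - ε)) hu0.le]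

lemma aux_num3 (ε u : ℝ) (hε0 : 0 < ε) (hε1 : ε ≤ 1) (hu0 : 0 < u) (hεu : 32 ≤ ε * u) :
    (1 + ε/2) * u + 1 ≤ (1 - ε/8) * ((1+ε) * u) := by
  nlinarith [mul_nonneg (mul_nonneg hε0.le (by linarith : (0:ℝ) ≤ 1 - ε)) hu0.le]

lemma aux_trunc {Ω : Type*} [MeasureSpace Ω] [IsProbabilityMeasure (ℙ : Measure Ω)]
    (X : Ω → ℝ) (hm : Measurable X) (h0 : ∀ ω, 0 ≤ X ω) (hint : Integrable X)
    (δ : ℝ) (hδ : 0 < δ) :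
    ∃ M : ℝ, 1 ≤ M ∧ (∫ ω, X ω) - δ ≤ ∫ ω, min (X ω) M := by
  have htend : Tendsto (fun k : ℕ => ∫ ω, min (X ω) (k : ℝ)) atTop (𝓝 (∫ ω, X ω)) := by
    apply tendsto_integral_of_dominated_convergence (fun ω => X ω)
    · exact fun k => ((hm.min measurable_const)).aestronglyMeasurable
    · exact hint
    · intro k
      filter_upwards with ω
      rw [Real.norm_eq_abs, abs_of_nonneg (le_min (h0 ω) (Nat.cast_nonneg k))]
      exact min_le_left _ _
    · filter_upwards with ω
      have : ∀ᶠ k : ℕ in atTop, min (X ω) (k : ℝ) = X ω := by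
        filter_upwards [eventually_ge_atTop ⌈X ω⌉₊] with k hk
        exact min_eq_left ((Nat.le_ceil _).trans (Nat.cast_le.2 hk))
      exact Tendsto.congr' (this.mono fun k h => h.symm) tendsto_const_nhds
  have hlt : (∫ ω, X ω) - δ < ∫ ω, X ω := by linarith
  have h2 : ∀ᶠ k : ℕ in atTop, (∫ ω, X ω) - δ ≤ ∫ ω, min (X ω) (k : ℝ) :=
    htend.eventually (eventually_ge_nhds hlt)
  obtain ⟨k, hk1, hk2⟩ := (h2.and (eventually_ge_atTop 1)).exists
  exact ⟨(k : ℝ), by exact_mod_cast hk2, hk1⟩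

lemma aux_mgf_W {Ω : Type*} [MeasureSpace Ω] [IsProbabilityMeasure (ℙ : Measure Ω)]
    (X : Ω → ℝ) (hm : Measurable X) (h0 : ∀ ω, 0 ≤ X ω) (hint : Integrable X)
    (lam M : ℝ) (hlam : 0 ≤ lam) (hM : 0 ≤ M) :
    mgf X ℙ (-lam) ≤ Real.exp (-(lam * ∫ ω, min (X ω) M) + (lam * M) ^ 2) := by
  have hint_min : Integrable (fun ω => min (X ω) M) := by
    refine hint.mono' ((hm.min measurable_const).aestronglyMeasurable) ?_
    filter_upwards with ω
    rw [Real.norm_eq_abs, abs_of_nonneg (le_min (h0 ω) hM)]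
    exact min_le_left _ _
  have hint_exp : Integrable (fun ω => Real.exp (-lam * X ω)) := by
    refine (integrable_const (1:ℝ)).mono' ((hm.const_mul (-lam)).exp).aestronglyMeasurable ?_
    filter_upwards with ω
    rw [Real.norm_eq_abs, abs_of_nonneg (Real.exp_pos _).le, ← Real.exp_zero]
    apply Real.exp_le_exp.2
    have := mul_nonneg hlam (h0 ω); nlinarith
  have hpt : ∀ ω, Real.exp (-lam * X ω) ≤ 1 - lam * min (X ω) M + (lam * M) ^ 2 := by
    intro ω
    rcases le_or_gt (X ω) M with h | h
    · rw [min_eq_left h]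
      have h1 := aux_exp_neg_le (mul_nonneg hlam (h0 ω))
      have h2 : (lam * X ω) ^ 2 ≤ (lam * M) ^ 2 := by
        apply sq_le_sq' <;> nlinarith [mul_nonneg hlam (h0 ω), mul_nonneg hlam hM,
          mul_le_mul_of_nonneg_left h hlam]
      calc Real.exp (-lam * X ω) = Real.exp (-(lam * X ω)) := by ring_nf
        _ ≤ 1 - lam * X ω + (lam * X ω) ^ 2 := h1
        _ ≤ 1 - lam * X ω + (lam * M) ^ 2 := by linarith
    · rw [min_eq_right h.le]
      have h1 := aux_exp_neg_le (mul_nonneg hlam hM)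
      calc Real.exp (-lam * X ω) ≤ Real.exp (-(lam * M)) := by
            apply Real.exp_le_exp.2; nlinarith [mul_le_mul_of_nonneg_left h.le hlam]
        _ ≤ 1 - lam * M + (lam * M) ^ 2 := h1
  have hRint : Integrable (fun ω => 1 - lam * min (X ω) M + (lam * M) ^ 2) := by
    exact ((integrable_const (1:ℝ)).sub (hint_min.const_mul lam)).add (integrable_const _)
  have h1 : mgf X ℙ (-lam) ≤ ∫ ω, (1 - lam * min (X ω) M + (lam * M) ^ 2) := by
    unfold mgf
    exact integral_mono hint_exp hRint hpt
  have h2 : ∫ ω, (1 - lam * min (X ω) M + (lam * M) ^ 2)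
      = 1 - lam * (∫ ω, min (X ω) M) + (lam * M) ^ 2 := by
    have e1 : Integrable (fun ω => 1 - lam * min (X ω) M) := by
      exact (integrable_const (1:ℝ)).sub (hint_min.const_mul lam)
    have e2 : Integrable (fun ω => lam * min (X ω) M) := hint_min.const_mul lam
    rw [integral_add e1 (integrable_const _), integral_sub (integrable_const (1:ℝ)) e2,
      integral_const, integral_const_mul]
    simp
  have h3 := Real.add_one_le_exp (-(lam * ∫ ω, min (X ω) M) + (lam * M) ^ 2)
  linarith [h1, h2.le]

lemma aux_mgf_Y {Ω : Type*} [MeasureSpace Ω] [IsProbabilityMeasure (ℙ : Measure Ω)]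
    (Y : Ω → ℝ) (hm : Measurable Y) (h01 : ∀ ω, Y ω ∈ Set.Icc (0:ℝ) 1)
    (θ : ℝ) (hθ : 0 ≤ θ) :
    mgf Y ℙ θ ≤ Real.exp ((∫ ω, Y ω) * (Real.exp θ - 1)) := by
  have hint : Integrable Y := by
    refine (integrable_const (1:ℝ)).mono' hm.aestronglyMeasurable ?_
    filter_upwards with ω
    rw [Real.norm_eq_abs, abs_of_nonneg (h01 ω).1]; exact (h01 ω).2
  have hRint : Integrable (fun ω => 1 + Y ω * (Real.exp θ - 1)) :=
    (integrable_const (1:ℝ)).add (hint.mul_const _)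
  have hint_exp : Integrable (fun ω => Real.exp (θ * Y ω)) := by
    refine (integrable_const (Real.exp θ)).mono' ((hm.const_mul θ).exp).aestronglyMeasurable ?_
    filter_upwards with ω
    rw [Real.norm_eq_abs, abs_of_nonneg (Real.exp_pos _).le]
    apply Real.exp_le_exp.2
    nlinarith [(h01 ω).1, (h01 ω).2]
  have h1 : mgf Y ℙ θ ≤ ∫ ω, (1 + Y ω * (Real.exp θ - 1)) := by
    unfold mgf
    exact integral_mono hint_exp hRint (fun ω => aux_exp_convex (h01 ω).1 (h01 ω).2)
  have h2 : ∫ ω, (1 + Y ω * (Real.exp θ - 1)) = 1 + (∫ ω, Y ω) * (Real.exp θ - 1) := by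
    rw [integral_add (integrable_const (1:ℝ)) (hint.mul_const _)]
    simp [integral_const, integral_mul_const]
  have h3 := Real.add_one_le_exp ((∫ ω, Y ω) * (Real.exp θ - 1))
  linarith [h1, h2.le]

lemma aux_incl {Ω : Type*} (W Y : ℕ → Ω → ℝ) (hW0 : ∀ k ω, 0 ≤ W k ω)
    (hY0 : ∀ k ω, 0 ≤ Y k ω) (t thr : ℝ) (ht : 0 ≤ t) (N : ℕ) :
    {ω | thr < ∑ k ∈ Finset.range
        (sSup {n : ℕ | ∑ j ∈ Finset.range n, W j ω ≤ t}), Y k ω} ⊆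
    {ω | ∑ j ∈ Finset.range N, W j ω ≤ t} ∪
    {ω | thr < ∑ k ∈ Finset.range N, Y k ω} := by
  intro ω hω
  simp only [Set.mem_setOf_eq] at hω
  set S : Set ℕ := {n : ℕ | ∑ j ∈ Finset.range n, W j ω ≤ t} with hS
  by_cases hA : sSup S ≤ N
  · right
    simp only [Set.mem_setOf_eq]
    refine lt_of_lt_of_le hω ?_
    exact Finset.sum_le_sum_of_subset_of_nonneg (Finset.range_subset_range.2 hA)
      (fun i _ _ => hY0 i ω)
  · left
    push_neg at hA
    have hAne : sSup S ≠ 0 := by omega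
    have hbdd : BddAbove S := by
      by_contra hb
      rw [csSup_of_not_bddAbove hb, csSup_empty] at hAne
      exact hAne rfl
    have hne : S.Nonempty := ⟨0, by simp [hS, ht]⟩
    have hmem : sSup S ∈ S := Nat.sSup_mem hne hbdd
    simp only [hS, Set.mem_setOf_eq] at hmem ⊢
    refine le_trans ?_ hmem
    exact Finset.sum_le_sum_of_subset_of_nonneg (Finset.range_subset_range.2 hA.le)
      (fun i _ _ => hW0 i ω)

lemma aux_E1 {Ω : Type*} [MeasureSpace Ω] [IsProbabilityMeasure (ℙ : Measure Ω)]
    (W : ℕ → Ω → ℝ)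
    (hWmeas : ∀ k, Measurable (W k))
    (hWnonneg : ∀ k ω, 0 ≤ W k ω)
    (hWindep : iIndepFun (fun k => W (k + 1)) ℙ)
    (hWident : ∀ k, Measure.map (W (k + 1)) ℙ = Measure.map (W 1) ℙ)
    (lam γ : ℝ) (hlam : 0 < lam) (hγ : 0 ≤ γ)
    (hmgf1 : mgf (W 1) ℙ (-lam) ≤ Real.exp (-γ)) (t : ℝ) (n : ℕ) :
    (ℙ {ω | ∑ j ∈ Finset.range (n + 1), W j ω ≤ t}).toReal
      ≤ Real.exp (lam * t - n * γ) := by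
  set X : ℕ → Ω → ℝ := fun k => W (k + 1) with hX
  set SW : Ω → ℝ := ∑ i ∈ Finset.range n, X i with hSW
  have hSWapply : ∀ ω, SW ω = ∑ i ∈ Finset.range n, W (i + 1) ω := by
    intro ω; rw [hSW, Finset.sum_apply]
  have hSWmeas : Measurable SW := by
    rw [show SW = fun ω => ∑ i ∈ Finset.range n, W (i + 1) ω from funext hSWapply]
    exact Finset.measurable_sum _ (fun i _ => hWmeas (i + 1))
  have hSWnonneg : ∀ ω, 0 ≤ SW ω := by
    intro ω; rw [hSWapply]
    exact Finset.sum_nonneg fun i _ => hWnonneg (i + 1) ω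
  have hint : Integrable (fun ω => Real.exp (-lam * SW ω)) := by
    refine (integrable_const (1:ℝ)).mono' ((hSWmeas.const_mul (-lam)).exp).aestronglyMeasurable ?_
    filter_upwards with ω
    rw [Real.norm_eq_abs, abs_of_nonneg (Real.exp_pos _).le, ← Real.exp_zero]
    apply Real.exp_le_exp.2
    nlinarith [hSWnonneg ω, hlam]
  -- subset
  have hsub : {ω | ∑ j ∈ Finset.range (n + 1), W j ω ≤ t} ⊆ {ω | SW ω ≤ t} := by
    intro ω hω
    simp only [Set.mem_setOf_eq] at hω ⊢
    rw [hSWapply]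
    have := Finset.sum_range_succ' (fun j => W j ω) n
    have h0 := hWnonneg 0 ω
    linarith [hω, this.le, this.ge]
  have h1 : (ℙ {ω | ∑ j ∈ Finset.range (n + 1), W j ω ≤ t}).toReal
      ≤ (ℙ {ω | SW ω ≤ t}).toReal :=
    ENNReal.toReal_mono (measure_ne_top _ _) (measure_mono hsub)
  -- Chernoff
  have h2 := measure_le_le_exp_mul_mgf (μ := ℙ) (X := SW) t
    (by linarith : -lam ≤ 0) hint
  -- mgf product
  have h3 : mgf SW ℙ (-lam) = ∏ i ∈ Finset.range n, mgf (X i) ℙ (-lam) :=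
    hWindep.mgf_sum (fun i => hWmeas (i + 1)) (Finset.range n)
  have h4 : ∀ i : ℕ, mgf (X i) ℙ (-lam) = mgf (W 1) ℙ (-lam) := by
    intro i
    have hg : Continuous fun x : ℝ => Real.exp (-lam * x) := by continuity
    unfold mgf
    calc ∫ ω, Real.exp (-lam * X i ω) ∂ℙ
        = ∫ x, Real.exp (-lam * x) ∂(Measure.map (W (i + 1)) ℙ) :=
          (integral_map (hWmeas (i + 1)).aemeasurable hg.aestronglyMeasurable).symm
      _ = ∫ x, Real.exp (-lam * x) ∂(Measure.map (W 1) ℙ) := by rw [hWident i]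
      _ = ∫ ω, Real.exp (-lam * W 1 ω) ∂ℙ :=
          integral_map (hWmeas 1).aemeasurable hg.aestronglyMeasurable
  have h5 : mgf SW ℙ (-lam) ≤ Real.exp (-γ) ^ n := by
    rw [h3, Finset.prod_congr rfl (fun i _ => h4 i), Finset.prod_const, Finset.card_range]
    exact pow_le_pow_left₀ mgf_nonneg hmgf1 n
  calc (ℙ {ω | ∑ j ∈ Finset.range (n + 1), W j ω ≤ t}).toReal
      ≤ Real.exp (-(-lam) * t) * mgf SW ℙ (-lam) := le_trans h1 h2
    _ ≤ Real.exp (lam * t) * Real.exp (-γ) ^ n := by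
        rw [neg_neg]
        exact mul_le_mul_of_nonneg_left h5 (Real.exp_pos _).le
    _ = Real.exp (lam * t - n * γ) := by
        rw [← Real.exp_nat_mul, ← Real.exp_add]
        ring_nf

lemma aux_E2chernoff {Ω : Type*} [MeasureSpace Ω] [IsProbabilityMeasure (ℙ : Measure Ω)]
    (Y : ℕ → Ω → ℝ) (m : ℝ)
    (hYmeas : ∀ k, Measurable (Y k))
    (hY01 : ∀ k ω, Y k ω ∈ Set.Icc (0:ℝ) 1)
    (hYindep : iIndepFun Y ℙ)
    (hYmean : ∀ k, ∫ ω, Y k ω = m)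
    (θ thr : ℝ) (hθ : 0 ≤ θ) (N : ℕ) :
    (ℙ {ω | thr ≤ ∑ k ∈ Finset.range N, Y k ω}).toReal
      ≤ Real.exp (-θ * thr + N * (m * (Real.exp θ - 1))) := by
  set SY : Ω → ℝ := ∑ k ∈ Finset.range N, Y k with hSY
  have hSYapply : ∀ ω, SY ω = ∑ k ∈ Finset.range N, Y k ω := by
    intro ω; rw [hSY, Finset.sum_apply]
  have hintk : ∀ k : ℕ, Integrable (fun ω => Real.exp (θ * Y k ω)) := by
    intro k
    refine (integrable_const (Real.exp θ)).mono'
      (((hYmeas k).const_mul θ).exp).aestronglyMeasurable ?_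
    filter_upwards with ω
    rw [Real.norm_eq_abs, abs_of_nonneg (Real.exp_pos _).le]
    apply Real.exp_le_exp.2
    nlinarith [(hY01 k ω).1, (hY01 k ω).2]
  have hint : Integrable (fun ω => Real.exp (θ * SY ω)) :=
    hYindep.integrable_exp_mul_sum hYmeas (fun k _ => hintk k)
  have h2 := measure_ge_le_exp_mul_mgf (μ := ℙ) (X := SY) thr hθ hint
  have h3 : mgf SY ℙ θ = ∏ k ∈ Finset.range N, mgf (Y k) ℙ θ :=
    hYindep.mgf_sum hYmeas (Finset.range N)
  have h5 : mgf SY ℙ θ ≤ Real.exp (m * (Real.exp θ - 1)) ^ N := by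
    rw [h3]
    calc ∏ k ∈ Finset.range N, mgf (Y k) ℙ θ
        ≤ ∏ _k ∈ Finset.range N, Real.exp (m * (Real.exp θ - 1)) := by
          refine Finset.prod_le_prod (fun k _ => mgf_nonneg) (fun k _ => ?_)
          have := aux_mgf_Y (Y k) (hYmeas k) (hY01 k) θ hθ
          rwa [hYmean k] at this
      _ = Real.exp (m * (Real.exp θ - 1)) ^ N := by
          rw [Finset.prod_const, Finset.card_range]
  have hset : {ω | thr ≤ ∑ k ∈ Finset.range N, Y k ω} = {ω | thr ≤ SY ω} := by
    ext ω; simp [hSYapply]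
  rw [hset]
  calc (ℙ {ω | thr ≤ SY ω}).toReal ≤ Real.exp (-θ * thr) * mgf SY ℙ θ := h2
    _ ≤ Real.exp (-θ * thr) * Real.exp (m * (Real.exp θ - 1)) ^ N :=
        mul_le_mul_of_nonneg_left h5 (Real.exp_pos _).le
    _ = Real.exp (-θ * thr + N * (m * (Real.exp θ - 1))) := by
        rw [← Real.exp_nat_mul, ← Real.exp_add]

lemma aux_E2markov {Ω : Type*} [MeasureSpace Ω] [IsProbabilityMeasure (ℙ : Measure Ω)]
    (Y : ℕ → Ω → ℝ) (m : ℝ)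
    (hYmeas : ∀ k, Measurable (Y k))
    (hY01 : ∀ k ω, Y k ω ∈ Set.Icc (0:ℝ) 1)
    (hYmean : ∀ k, ∫ ω, Y k ω = m)
    (thr : ℝ) (hthr : 0 < thr) (N : ℕ) :
    (ℙ {ω | thr ≤ ∑ k ∈ Finset.range N, Y k ω}).toReal ≤ N * m / thr := by
  have hintk : ∀ k : ℕ, Integrable (Y k) := by
    intro k
    refine (integrable_const (1:ℝ)).mono' (hYmeas k).aestronglyMeasurable ?_
    filter_upwards with ω
    rw [Real.norm_eq_abs, abs_of_nonneg (hY01 k ω).1]; exact (hY01 k ω).2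
  have hint : Integrable (fun ω => ∑ k ∈ Finset.range N, Y k ω) :=
    integrable_finset_sum _ (fun k _ => hintk k)
  have hnn : 0 ≤ᵐ[ℙ] fun ω => ∑ k ∈ Finset.range N, Y k ω := by
    filter_upwards with ω
    exact Finset.sum_nonneg fun k _ => (hY01 k ω).1
  have h := mul_meas_ge_le_integral_of_nonneg hnn hint thr
  have hI : ∫ ω, ∑ k ∈ Finset.range N, Y k ω = N * m := by
    rw [integral_finset_sum _ (fun k _ => hintk k)]
    simp [hYmean, Finset.sum_const, Finset.card_range]
  rw [hI] at h
  rw [div_eq_inv_mul, ← mul_le_mul_iff_right₀ hthr, ← mul_assoc, mul_inv_cancel₀ hthr.ne', one_mul]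
  exact h

set_option maxHeartbeats 2000000 in
theorem renewal_reward_upper_bound {Ω : Type*} [MeasureSpace Ω]
    [IsProbabilityMeasure (ℙ : Measure Ω)]
    (W : ℕ → Ω → ℝ) (β : ℝ) (hβ : 0 < β)
    (hWmeas : ∀ k, Measurable (W k))
    (hWnonneg : ∀ k ω, 0 ≤ W k ω)
    (hWindep : iIndepFun (fun k => W (k + 1)) ℙ)
    (hWident : ∀ k, Measure.map (W (k + 1)) ℙ = Measure.map (W 1) ℙ)
    (hWint : Integrable (W 1))
    (hWmean : ∫ ω, W 1 ω = β)
    (ε : ℝ) (hε : ε ∈ Set.Ioc (0 : ℝ) 1) :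
    ∃ C : ℝ, 0 < C ∧ ∃ T : ℝ, ∀ (Y : ℕ → Ω → ℝ) (m : ℝ),
      (∀ k, Measurable (Y k)) →
      (∀ k ω, Y k ω ∈ Set.Icc (0 : ℝ) 1) →
      iIndepFun Y ℙ →
      (∀ k, Measure.map (Y k) ℙ = Measure.map (Y 0) ℙ) →
      (∫ ω, Y 0 ω = m) →
      IndepFun (fun ω k => W k ω) (fun ω k => Y k ω) ℙ →
      ∀ t : ℝ, T ≤ t →
        (ℙ {ω | (1 + ε) * β⁻¹ * m * t <
              ∑ k ∈ Finset.range
                (sSup {n : ℕ | ∑ j ∈ Finset.range n, W j ω ≤ t}), Y k ω}).toReal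
          ≤ Real.exp (-C * m * t) := by
  obtain ⟨hε0, hε1⟩ := hε
  have hβ' : β ≠ 0 := ne_of_gt hβ
  obtain ⟨M, hM1, hMge⟩ := aux_trunc (W 1) (hWmeas 1) (hWnonneg 1) hWint (β * (ε/16))
    (by positivity)
  rw [hWmean] at hMge
  have hM0 : (0:ℝ) < M := lt_of_lt_of_le one_pos hM1
  set lam : ℝ := ε * β / (16 * M ^ 2) with hlam_def
  have hlam : 0 < lam := by positivity
  set γ : ℝ := lam * β * (1 - ε / 8) with hγ_def
  have hγpos : 0 < γ := by
    apply mul_pos (mul_pos hlam hβ); linarith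
  set c1 : ℝ := lam * ε / 8 with hc1_def
  have hc1 : 0 < c1 := by positivity
  set θ : ℝ := ε / 8 with hθ_def
  have hθ0 : 0 < θ := by positivity
  set c2 : ℝ := θ * ε / (16 * β) with hc2_def
  have hc2 : 0 < c2 := by positivity
  have hminpos : 0 < min c1 c2 := lt_min hc1 hc2
  set C : ℝ := min c1 c2 / 2 with hC_def
  have hC : 0 < C := by positivity
  have hCc1 : C ≤ c1 / 2 := by
    have := min_le_left c1 c2; rw [hC_def]; linarith
  have hCc2 : C ≤ c2 / 2 := by
    have := min_le_right c1 c2; rw [hC_def]; linarith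
  have h116 : (0:ℝ) < 1 - ε/16 := by linarith
  set a : ℝ := -Real.log (1 - ε/16) with ha_def
  have ha : 0 < a := by
    have := Real.log_neg h116 (by linarith); rw [ha_def]; linarith
  set K : ℝ := a / C with hK_def
  have hK : 0 < K := div_pos ha hC
  set b : ℝ := 1 - Real.exp (-(c2/2) * K) with hb_def
  have hb0 : 0 < b := by
    have h : -(c2/2) * K < 0 := by
      have h1 : 0 < c2/2 * K := mul_pos (by linarith) hK
      linarith
    have := Real.exp_lt_one_iff.mpr h
    rw [hb_def]; linarith
  have hb1 : b < 1 := by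
    have := Real.exp_pos (-(c2/2) * K); rw [hb_def]; linarith
  -- mgf bound for W 1
  have hmgf1 : mgf (W 1) ℙ (-lam) ≤ Real.exp (-γ) := by
    have h := aux_mgf_W (W 1) (hWmeas 1) (hWnonneg 1) hWint lam M hlam.le (by linarith)
    refine h.trans (Real.exp_le_exp.2 ?_)
    have hlM : lam * M ^ 2 = ε * β / 16 := by
      rw [hlam_def]; field_simp
    have h2 : (lam * M) ^ 2 = lam * (ε * β / 16) := by
      rw [← hlM]; ring
    rw [h2, hγ_def, hθ_def]
    exact aux_num0 lam β ε _ (mul_le_mul_of_nonneg_left hMge hlam.le)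
  set T : ℝ := max 1 (max (32*β/ε)
    (max ((-Real.log (ε/16))/c1 + 1) ((-2*Real.log b)/c1 + 1))) with hT_def
  clear_value lam γ c1 θ c2 C a K b T
  refine ⟨C, hC, T, ?_⟩
  intro Y m hYmeas hY01 hYindep hYident hYmean hWYindep t htT
  rw [hT_def] at htT
  have ht1 : (1:ℝ) ≤ t := le_trans (le_max_left _ _) htT
  have ht0 : (0:ℝ) < t := by linarith
  have hmaxR := le_trans (le_max_right (1:ℝ) _) htT
  have ht32 : 32*β/ε ≤ t := le_trans (le_max_left _ _) hmaxR
  have hmaxRR := le_trans (le_max_right (32*β/ε) _) hmaxR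
  have hT3 : (-Real.log (ε/16))/c1 + 1 ≤ t := le_trans (le_max_left _ _) hmaxRR
  have hT4 : (-2*Real.log b)/c1 + 1 ≤ t := le_trans (le_max_right _ _) hmaxRR
  have hεt : 32 * β ≤ ε * t := by
    have := (div_le_iff₀ (by positivity : (0:ℝ) < ε)).1 (by linarith : 32*β/ε ≤ t)
    linarith
  have hexp1 : Real.exp (-(c1 * t)) ≤ ε/16 := by
    have h1 : -Real.log (ε/16) ≤ c1 * t := by
      have := (div_le_iff₀ hc1).1 (by linarith : (-Real.log (ε/16))/c1 ≤ t)
      linarith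
    calc Real.exp (-(c1 * t)) ≤ Real.exp (Real.log (ε/16)) :=
          Real.exp_le_exp.2 (by linarith)
      _ = ε/16 := Real.exp_log (by positivity)
  have hexp2 : Real.exp (-(c1/2 * t)) ≤ b := by
    have h1 : -2 * Real.log b ≤ c1 * t := by
      have := (div_le_iff₀ hc1).1 (by linarith : (-2*Real.log b)/c1 ≤ t)
      linarith
    calc Real.exp (-(c1/2 * t)) ≤ Real.exp (Real.log b) :=
          Real.exp_le_exp.2 (by linarith)
      _ = b := Real.exp_log hb0
  have hYint0 : Integrable (Y 0) := by
    refine (integrable_const (1:ℝ)).mono' (hYmeas 0).aestronglyMeasurable ?_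
    filter_upwards with ω
    rw [Real.norm_eq_abs, abs_of_nonneg (hY01 0 ω).1]; exact (hY01 0 ω).2
  have hm0 : 0 ≤ m := by
    rw [← hYmean]; exact integral_nonneg (fun ω => (hY01 0 ω).1)
  have hm1 : m ≤ 1 := by
    rw [← hYmean]
    calc ∫ ω, Y 0 ω ≤ ∫ _ω, (1:ℝ) :=
          integral_mono hYint0 (integrable_const 1) (fun ω => (hY01 0 ω).2)
      _ = 1 := by simp
  rcases eq_or_lt_of_le hm0 with hm | hm
  · -- m = 0
    have hz : -C * m * t = 0 := by rw [← hm]; ring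
    rw [hz, Real.exp_zero]
    refine le_trans (ENNReal.toReal_mono ENNReal.one_ne_top prob_le_one) ?_
    simp
  -- main case 0 < m
  have hYmeank : ∀ k, ∫ ω, Y k ω = m := by
    intro k
    have hg : Continuous fun x : ℝ => x := continuous_id
    calc ∫ ω, Y k ω ∂ℙ
        = ∫ x, x ∂(Measure.map (Y k) ℙ) :=
          (integral_map (hYmeas k).aemeasurable hg.aestronglyMeasurable).symm
      _ = ∫ x, x ∂(Measure.map (Y 0) ℙ) := by rw [hYident k]
      _ = ∫ ω, Y 0 ω ∂ℙ := integral_map (hYmeas 0).aemeasurable hg.aestronglyMeasurable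
      _ = m := hYmean
  set N : ℕ := ⌈(1 + ε/2) * β⁻¹ * t⌉₊ with hN_def
  have hargpos : 0 < (1 + ε/2) * β⁻¹ * t := by positivity
  have hN1 : 1 ≤ N := by
    have := Nat.ceil_pos.mpr hargpos; omega
  have hNlb : (1 + ε/2) * β⁻¹ * t ≤ (N:ℝ) := Nat.le_ceil _
  have hNub : (N:ℝ) ≤ (1 + ε/2) * β⁻¹ * t + 1 := (Nat.ceil_lt_add_one hargpos.le).le
  clear_value N
  set thr : ℝ := (1 + ε) * β⁻¹ * m * t with hthr_def
  have hthr : 0 < thr := by rw [hthr_def]; positivity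
  clear_value thr
  set n : ℕ := N - 1 with hn_def
  have hNn : N = n + 1 := by omega
  have hncast : (n:ℝ) = (N:ℝ) - 1 := by
    rw [hn_def, Nat.cast_sub hN1, Nat.cast_one]
  clear_value n
  have hn' : (1 + ε/2) * β⁻¹ * t - 1 ≤ (n:ℝ) := by rw [hncast]; linarith
  -- key pure-real inequality helpers
  have hu0 : (0:ℝ) < β⁻¹ * t := by positivity
  have hεu : 32 ≤ ε * (β⁻¹ * t) := by
    have h := mul_le_mul_of_nonneg_left hεt (le_of_lt (inv_pos.2 hβ))
    calc (32:ℝ) = β⁻¹ * (32 * β) := by field_simp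
      _ ≤ β⁻¹ * (ε * t) := h
      _ = ε * (β⁻¹ * t) := by ring
  -- union bound
  have hincl := aux_incl W Y hWnonneg (fun k ω => (hY01 k ω).1) t thr ht0.le N
  have hsplit : (ℙ {ω | thr < ∑ k ∈ Finset.range
        (sSup {n : ℕ | ∑ j ∈ Finset.range n, W j ω ≤ t}), Y k ω}).toReal
      ≤ (ℙ {ω | ∑ j ∈ Finset.range N, W j ω ≤ t}).toReal
        + (ℙ {ω | thr < ∑ k ∈ Finset.range N, Y k ω}).toReal := by
    have h1 := le_trans (measure_mono hincl) (measure_union_le (μ := ℙ) _ _)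
    have h2 := ENNReal.toReal_mono
      (ENNReal.add_ne_top.2 ⟨measure_ne_top _ _, measure_ne_top _ _⟩) h1
    rwa [ENNReal.toReal_add (measure_ne_top _ _) (measure_ne_top _ _)] at h2
  -- E1 bound
  have hE1 : (ℙ {ω | ∑ j ∈ Finset.range N, W j ω ≤ t}).toReal ≤ Real.exp (-(c1*t)) := by
    have h := aux_E1 W hWmeas hWnonneg hWindep hWident lam γ hlam hγpos.le hmgf1 t n
    rw [hNn]
    refine h.trans (Real.exp_le_exp.2 ?_)
    have hγval : γ = lam * β * (1 - ε/8) := by rw [hγ_def, hθ_def]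
    have e0 : (1 + ε/2) * β⁻¹ * t * (lam * β * (1 - ε/8))
        = (1 + ε/2) * (1 - ε/8) * lam * t := by field_simp
    have key : (1 + ε/2) * (1 - ε/8) * lam * t - lam * β * (1 - ε/8) ≤ (n:ℝ) * γ := by
      have h1 := mul_le_mul_of_nonneg_right hn' hγpos.le
      rw [hγval] at h1 ⊢
      calc (1 + ε/2) * (1 - ε/8) * lam * t - lam * β * (1 - ε/8)
          = ((1 + ε/2) * β⁻¹ * t - 1) * (lam * β * (1 - ε/8)) := by rw [sub_mul, e0]; ring
        _ ≤ (n:ℝ) * (lam * β * (1 - ε/8)) := h1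
    have hnum := aux_num1 lam t β ε hlam ht0 hβ hε0 hε1 hεt
    rw [hc1_def]
    linarith [key]
  have hE1' : (ℙ {ω | ∑ j ∈ Finset.range N, W j ω ≤ t}).toReal ≤ ε/16 :=
    hE1.trans hexp1
  -- E2 Chernoff
  have hE2c : (ℙ {ω | thr < ∑ k ∈ Finset.range N, Y k ω}).toReal
      ≤ Real.exp (-(c2 * (m * t))) := by
    have h := aux_E2chernoff Y m hYmeas hY01 hYindep hYmeank θ thr hθ0.le N
    have hmono : (ℙ {ω | thr < ∑ k ∈ Finset.range N, Y k ω}).toReal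
        ≤ (ℙ {ω | thr ≤ ∑ k ∈ Finset.range N, Y k ω}).toReal :=
      by
        refine ENNReal.toReal_mono (measure_ne_top _ _) (measure_mono ?_)
        intro ω hω
        simp only [Set.mem_setOf_eq] at hω ⊢
        exact hω.le
    refine hmono.trans (h.trans (Real.exp_le_exp.2 ?_))
    -- -θ*thr + N*(m*(exp θ - 1)) ≤ -(c2*(m*t))
    have hexpθ : Real.exp θ - 1 ≤ θ * (1 + ε/4) := by
      have h1 := aux_exp_small hθ0.le (by rw [hθ_def]; linarith)
      have h2 : 2 * θ^2 = θ * (ε/4) := by rw [hθ_def]; ring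
      linarith
    have hexpθ0 : 0 ≤ Real.exp θ - 1 := by
      have := Real.add_one_le_exp θ; linarith
    have hNbd : (N:ℝ) * (m * (Real.exp θ - 1))
        ≤ ((1 + ε/2) * (β⁻¹*t) + 1) * (m * (θ * (1 + ε/4))) := by
      refine mul_le_mul ?_ (mul_le_mul_of_nonneg_left hexpθ hm0) ?_ ?_
      · calc (N:ℝ) ≤ (1 + ε/2) * β⁻¹ * t + 1 := hNub
          _ = (1 + ε/2) * (β⁻¹*t) + 1 := by ring
      · exact mul_nonneg hm0 hexpθ0
      · positivity
    have hkey : -(1+ε) * (β⁻¹*t) + ((1 + ε/2) * (β⁻¹*t) + 1) * (1 + ε/4)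
        ≤ -(ε * (β⁻¹*t) / 16) := aux_num2 ε (β⁻¹*t) hε0 hε1 hu0 hεu
    have hkey2 := mul_le_mul_of_nonneg_left hkey (mul_nonneg hm0 hθ0.le)
    have hL : -θ * thr + ((1 + ε/2) * (β⁻¹*t) + 1) * (m * (θ * (1 + ε/4)))
        = (m * θ) * (-(1+ε) * (β⁻¹*t) + ((1 + ε/2) * (β⁻¹*t) + 1) * (1 + ε/4)) := by
      rw [hthr_def]; ring
    have hR : -(c2 * (m * t)) = (m * θ) * (-(ε * (β⁻¹*t) / 16)) := by
      rw [hc2_def]; field_simp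
    linarith [hNbd, hL.le, hL.ge, hR.le, hR.ge, hkey2]
  -- E2 Markov
  have hE2m : (ℙ {ω | thr < ∑ k ∈ Finset.range N, Y k ω}).toReal ≤ 1 - ε/8 := by
    have h := aux_E2markov Y m hYmeas hY01 hYmeank thr hthr N
    have hmono : (ℙ {ω | thr < ∑ k ∈ Finset.range N, Y k ω}).toReal
        ≤ (ℙ {ω | thr ≤ ∑ k ∈ Finset.range N, Y k ω}).toReal :=
      by
        refine ENNReal.toReal_mono (measure_ne_top _ _) (measure_mono ?_)
        intro ω hω
        simp only [Set.mem_setOf_eq] at hω ⊢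
        exact hω.le
    refine hmono.trans (h.trans ?_)
    rw [div_le_iff₀ hthr]
    have hkey : (1 + ε/2) * (β⁻¹*t) + 1 ≤ (1 - ε/8) * ((1+ε) * (β⁻¹*t)) :=
      aux_num3 ε (β⁻¹*t) hε0 hε1 hu0 hεu
    calc (N:ℝ) * m ≤ ((1 + ε/2) * (β⁻¹*t) + 1) * m := by
          refine mul_le_mul_of_nonneg_right ?_ hm0
          calc (N:ℝ) ≤ (1 + ε/2) * β⁻¹ * t + 1 := hNub
            _ = (1 + ε/2) * (β⁻¹*t) + 1 := by ring
      _ ≤ ((1 - ε/8) * ((1+ε) * (β⁻¹*t))) * m := mul_le_mul_of_nonneg_right hkey hm0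
      _ = (1 - ε/8) * thr := by rw [hthr_def]; ring
  -- combine
  have hgoal : -C * m * t = -(C * (m * t)) := by ring
  rw [hgoal]
  rcases le_or_gt (m * t) K with hcase | hcase
  · -- small m*t
    have h2 : (1:ℝ) - ε/16 ≤ Real.exp (-(C * (m*t))) := by
      have hCK : C * K = a := by
        rw [hK_def]; field_simp
      have he : Real.exp (-(C * K)) = 1 - ε/16 := by
        rw [hCK, ha_def, neg_neg, Real.exp_log h116]
      rw [← he]
      apply Real.exp_le_exp.2
      have := mul_le_mul_of_nonneg_left hcase hC.le
      linarith
    calc (ℙ _).toReal ≤ ε/16 + (1 - ε/8) := by linarith [hsplit, hE1', hE2m]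
      _ ≤ 1 - ε/16 := by linarith
      _ ≤ Real.exp (-(C * (m*t))) := h2
  · -- large m*t
    have hmt0 : 0 < m * t := lt_trans hK hcase
    have hA : (ℙ {ω | ∑ j ∈ Finset.range N, W j ω ≤ t}).toReal
        ≤ b * Real.exp (-(C * (m*t))) := by
      have e1 : Real.exp (-(c1*t)) = Real.exp (-(c1/2*t)) * Real.exp (-(c1/2*t)) := by
        rw [← Real.exp_add]; ring_nf
      have e2 : Real.exp (-(c1/2*t)) ≤ Real.exp (-(C * (m*t))) := by
        apply Real.exp_le_exp.2
        have h1 : C * (m*t) ≤ C * t :=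
          mul_le_mul_of_nonneg_left (mul_le_of_le_one_left ht0.le hm1) hC.le
        have h2 : C * t ≤ c1/2 * t := mul_le_mul_of_nonneg_right hCc1 ht0.le
        linarith
      calc (ℙ _).toReal ≤ Real.exp (-(c1*t)) := hE1
        _ = Real.exp (-(c1/2*t)) * Real.exp (-(c1/2*t)) := e1
        _ ≤ b * Real.exp (-(C * (m*t))) :=
            mul_le_mul hexp2 e2 (Real.exp_pos _).le hb0.le
    have hB : (ℙ {ω | thr < ∑ k ∈ Finset.range N, Y k ω}).toReal
        ≤ (1 - b) * Real.exp (-(C * (m*t))) := by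
      have e1 : Real.exp (-(c2 * (m*t)))
          = Real.exp (-((c2 - C) * (m*t))) * Real.exp (-(C * (m*t))) := by
        rw [← Real.exp_add]; ring_nf
      have e2 : Real.exp (-((c2 - C) * (m*t))) ≤ 1 - b := by
        have h1 : c2/2 * K ≤ (c2 - C) * (m*t) := by
          have ha1 : c2/2 ≤ c2 - C := by linarith
          have := mul_le_mul ha1 hcase.le hK.le (by linarith)
          linarith
        have e3 : 1 - b = Real.exp (-(c2/2) * K) := by rw [hb_def]; ring
        rw [e3]
        apply Real.exp_le_exp.2
        linarith
      calc (ℙ _).toReal ≤ Real.exp (-(c2 * (m*t))) := hE2c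
        _ = Real.exp (-((c2 - C) * (m*t))) * Real.exp (-(C * (m*t))) := e1
        _ ≤ (1 - b) * Real.exp (-(C * (m*t))) :=
            mul_le_mul_of_nonneg_right e2 (Real.exp_pos _).le
    calc (ℙ _).toReal ≤ b * Real.exp (-(C * (m*t))) + (1 - b) * Real.exp (-(C * (m*t))) := by
          linarith [hsplit, hA, hB]
      _ = Real.exp (-(C * (m*t))) := by ring
end

section
/- Let H̄* : [0,∞) → [0,1] be nonincreasing with H̄*(s) ≤ C₁/(1+s)^{2+δ} for C₁ ≥ 1, δ ∈ (0,1], and let Γ(σ) = σ + C₂·a·σ^γ with γ ∈ (0, 1/2], a, C₂ > 0. Suppose ∫_0^∞ H̄*(s) ds ≤ (1 + ε/2)·m for some m, ε > 0. Then for all sufficiently small a > 0, ∫_0^∞ Γ(H̄*(s))/(1+as) ds ≤ (1+ε)·m. -/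
open Real MeasureTheory

theorem gamma_integral_bound (C₁ C₂ γ δ m ε : ℝ) (Hbar : ℝ → ℝ)
    (hC₁ : 1 ≤ C₁) (hδ : δ ∈ Set.Ioc (0 : ℝ) 1)
    (hγ : γ ∈ Set.Ioc (0 : ℝ) (1 / 2)) (hC₂ : 0 < C₂)
    (hm : 0 < m) (hε : 0 < ε)
    (hHnonneg : ∀ s : ℝ, 0 ≤ s → Hbar s ∈ Set.Icc (0 : ℝ) 1)
    (hHmono : ∀ s₁ s₂ : ℝ, 0 ≤ s₁ → s₁ ≤ s₂ → Hbar s₂ ≤ Hbar s₁)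
    (hHtail : ∀ s : ℝ, 0 ≤ s → Hbar s ≤ C₁ / (1 + s) ^ (2 + δ))
    (hHint : ∫ s in Set.Ioi (0 : ℝ), Hbar s ≤ (1 + ε / 2) * m) :
    ∃ a₀ : ℝ, 0 < a₀ ∧ ∀ a : ℝ, a ∈ Set.Ioc (0 : ℝ) a₀ →
      ∫ s in Set.Ioi (0 : ℝ), (Hbar s + C₂ * a * Hbar s ^ γ) / (1 + a * s)
        ≤ (1 + ε) * m := by
  obtain ⟨hδ0, hδ1⟩ := hδ
  obtain ⟨hγ0, hγh⟩ := hγ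
  have hC₁0 : (0:ℝ) < C₁ := by linarith
  set β : ℝ := (2 + δ) * γ with hβdef
  have hβ : 0 < β := by positivity
  have hC₁γ : (0:ℝ) < C₁ ^ γ := rpow_pos_of_pos hC₁0 γ
  set K : ℝ := C₂ * C₁ ^ γ / β with hK
  have hK0 : 0 < K := by positivity
  set T : ℝ := max 1 ((4 * K / (ε * m)) ^ β⁻¹) with hT
  have hT1 : (1:ℝ) ≤ T := le_max_left _ _
  have hT0 : (0:ℝ) < T := lt_of_lt_of_le one_pos hT1
  have hTβpos : (0:ℝ) < T ^ β := rpow_pos_of_pos hT0 β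
  have hTβ : 4 * K / (ε * m) ≤ T ^ β := by
    calc 4 * K / (ε * m) = ((4 * K / (ε * m)) ^ β⁻¹) ^ β :=
          (Real.rpow_inv_rpow (by positivity) hβ.ne').symm
      _ ≤ T ^ β := Real.rpow_le_rpow (by positivity) (le_max_right _ _) hβ.le
  have hKT : K / T ^ β ≤ ε * m / 4 := by
    rw [div_le_iff₀ hTβpos]
    rw [div_le_iff₀ (by positivity : (0:ℝ) < ε * m)] at hTβ
    nlinarith
  clear_value β K T
  clear hTβ hT hT1
  have h4CT : (0:ℝ) < 4 * C₂ * T := mul_pos (by positivity) hT0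
  refine ⟨ε * m / (4 * C₂ * T), div_pos (by positivity) h4CT, ?_⟩
  rintro a ⟨ha0, ha₀⟩
  -- measurability of Hbar via antitone extension
  have hmeasH' : Measurable (fun s : ℝ => Hbar (max s 0)) := by
    apply Antitone.measurable
    intro s₁ s₂ h
    exact hHmono _ _ (le_max_right _ _) (max_le_max h le_rfl)
  have hae : ∀ S : Set ℝ, MeasurableSet S → S ⊆ Set.Ioi 0 →
      (fun s : ℝ => Hbar (max s 0)) =ᵐ[volume.restrict S] Hbar := by
    intro S hS hsub
    filter_upwards [ae_restrict_mem hS] with s hs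
    rw [max_eq_left (le_of_lt (hsub hs))]
  have hHsm : ∀ S : Set ℝ, MeasurableSet S → S ⊆ Set.Ioi 0 →
      AEStronglyMeasurable Hbar (volume.restrict S) := fun S hS hsub =>
    hmeasH'.aestronglyMeasurable.congr (hae S hS hsub)
  -- the extra term
  set g : ℝ → ℝ := fun s => C₂ * a * Hbar s ^ γ / (1 + a * s) with hg
  have hmeasG' : Measurable (fun s : ℝ => C₂ * a * Hbar (max s 0) ^ γ / (1 + a * s)) := by
    have h1 : Measurable (fun s : ℝ => Hbar (max s 0) ^ γ) :=
      (Real.continuous_rpow_const hγ0.le).measurable.comp hmeasH'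
    exact (measurable_const.mul h1).div
      (continuous_const.add (continuous_const.mul continuous_id)).measurable
  have hgsm : ∀ S : Set ℝ, MeasurableSet S → S ⊆ Set.Ioi 0 →
      AEStronglyMeasurable g (volume.restrict S) := by
    intro S hS hsub
    apply hmeasG'.aestronglyMeasurable.congr
    filter_upwards [ae_restrict_mem hS] with s hs
    rw [max_eq_left (le_of_lt (hsub hs))]
  -- basic positivity facts
  have hden : ∀ s : ℝ, 0 < s → (1:ℝ) ≤ 1 + a * s := fun s hs => by nlinarith
  have hgnn : ∀ s : ℝ, 0 < s → 0 ≤ g s := fun s hs => by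
    have := (hHnonneg s hs.le).1
    have hx : (0:ℝ) ≤ Hbar s ^ γ := rpow_nonneg this γ
    have := hden s hs
    positivity
  -- integrability of Hbar on Ioi 0
  have hintH1 : IntegrableOn Hbar (Set.Ioc 0 1) := by
    refine Integrable.mono'
      ((integrableOn_const (C := (1:ℝ)) (hs := measure_Ioc_lt_top.ne)))
      (hHsm _ measurableSet_Ioc (fun x hx => hx.1)) ?_
    filter_upwards [ae_restrict_mem measurableSet_Ioc] with s hs
    rw [Real.norm_eq_abs, abs_le]
    exact ⟨by linarith [(hHnonneg s hs.1.le).1], (hHnonneg s hs.1.le).2⟩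
  have hintH2 : IntegrableOn Hbar (Set.Ioi 1) := by
    refine Integrable.mono'
      ((integrableOn_Ioi_rpow_of_lt (a := -(2 + δ)) (by linarith) one_pos).const_mul C₁)
      (hHsm _ measurableSet_Ioi (fun x hx => Set.mem_Ioi.2 (lt_trans one_pos hx))) ?_
    filter_upwards [ae_restrict_mem measurableSet_Ioi] with s hs
    have hs0 : (0:ℝ) < s := lt_trans one_pos hs
    have h1 : s ^ (2 + δ) ≤ (1 + s) ^ (2 + δ) :=
      Real.rpow_le_rpow hs0.le (by linarith) (by linarith)
    have h2 : (0:ℝ) < s ^ (2 + δ) := rpow_pos_of_pos hs0 _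
    rw [Real.norm_eq_abs, abs_of_nonneg (hHnonneg s hs0.le).1]
    calc Hbar s ≤ C₁ / (1 + s) ^ (2 + δ) := hHtail s hs0.le
      _ ≤ C₁ / s ^ (2 + δ) := by gcongr
      _ = C₁ * s ^ (-(2 + δ)) := by
          rw [Real.rpow_neg hs0.le, div_eq_mul_inv]
  have hintH : IntegrableOn Hbar (Set.Ioi 0) := by
    rw [← Set.Ioc_union_Ioi_eq_Ioi (zero_le_one : (0:ℝ) ≤ 1)]
    exact hintH1.union hintH2
  -- integrability and bounds for g
  have hgboundIoc : ∀ s ∈ Set.Ioc (0:ℝ) T, g s ≤ C₂ * a := by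
    intro s hs
    have hx0 : (0:ℝ) ≤ Hbar s ^ γ := rpow_nonneg (hHnonneg s hs.1.le).1 γ
    have hx1 : Hbar s ^ γ ≤ 1 :=
      Real.rpow_le_one (hHnonneg s hs.1.le).1 (hHnonneg s hs.1.le).2 hγ0.le
    calc g s ≤ C₂ * a * Hbar s ^ γ := by
          apply div_le_self (by positivity) (hden s hs.1)
      _ ≤ C₂ * a * 1 := by gcongr
      _ = C₂ * a := mul_one _
  have hgboundIoi : ∀ s ∈ Set.Ioi T, g s ≤ C₂ * C₁ ^ γ * s ^ (-(1 + β)) := by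
    intro s hs
    have hs0 : (0:ℝ) < s := lt_trans hT0 hs
    have hHs0 := (hHnonneg s hs0.le).1
    have hX : Hbar s ^ γ ≤ C₁ ^ γ * s ^ (-β) := by
      have h1 : Hbar s ^ γ ≤ (C₁ / (1 + s) ^ (2 + δ)) ^ γ :=
        Real.rpow_le_rpow hHs0 (hHtail s hs0.le) hγ0.le
      have h2 : (C₁ / (1 + s) ^ (2 + δ)) ^ γ = C₁ ^ γ / (1 + s) ^ β := by
        rw [Real.div_rpow hC₁0.le (rpow_nonneg (by linarith) _),
          ← Real.rpow_mul (by linarith : (0:ℝ) ≤ 1 + s), ← hβdef]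
      have h3 : s ^ β ≤ (1 + s) ^ β := Real.rpow_le_rpow hs0.le (by linarith) hβ.le
      have h4 : (0:ℝ) < s ^ β := rpow_pos_of_pos hs0 _
      calc Hbar s ^ γ ≤ C₁ ^ γ / (1 + s) ^ β := by rw [← h2]; exact h1
        _ ≤ C₁ ^ γ / s ^ β := by gcongr
        _ = C₁ ^ γ * s ^ (-β) := by rw [Real.rpow_neg hs0.le, div_eq_mul_inv]
    have hXnn : (0:ℝ) ≤ Hbar s ^ γ := rpow_nonneg hHs0 γ
    have hstep : g s ≤ C₂ * Hbar s ^ γ / s := by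
      rw [hg, div_le_div_iff₀ (by nlinarith [hden s hs0] : (0:ℝ) < 1 + a * s) hs0]
      nlinarith [mul_nonneg hC₂.le hXnn]
    have hsplit : s ^ (-(1 + β)) = s ^ (-β) / s := by
      rw [show -(1 + β) = -β + (-1) by ring, Real.rpow_add hs0, Real.rpow_neg_one,
        div_eq_mul_inv]
    calc g s ≤ C₂ * Hbar s ^ γ / s := hstep
      _ ≤ C₂ * (C₁ ^ γ * s ^ (-β)) / s := by gcongr
      _ = C₂ * C₁ ^ γ * s ^ (-(1 + β)) := by rw [hsplit]; ring
  have hintg1 : IntegrableOn g (Set.Ioc 0 T) := by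
    refine Integrable.mono'
      ((integrableOn_const (C := C₂ * a) (hs := measure_Ioc_lt_top.ne)))
      (hgsm _ measurableSet_Ioc (fun x hx => hx.1)) ?_
    filter_upwards [ae_restrict_mem measurableSet_Ioc] with s hs
    rw [Real.norm_eq_abs, abs_of_nonneg (hgnn s hs.1)]
    exact hgboundIoc s hs
  have hintg2 : IntegrableOn g (Set.Ioi T) := by
    refine Integrable.mono'
      ((integrableOn_Ioi_rpow_of_lt (by linarith : -(1 + β) < -1) hT0).const_mul
        (C₂ * C₁ ^ γ))
      (hgsm _ measurableSet_Ioi (fun x hx => lt_trans hT0 hx)) ?_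
    filter_upwards [ae_restrict_mem measurableSet_Ioi] with s hs
    rw [Real.norm_eq_abs, abs_of_nonneg (hgnn s (lt_trans hT0 hs))]
    exact hgboundIoi s hs
  have hunion : Set.Ioc (0:ℝ) T ∪ Set.Ioi T = Set.Ioi 0 := Set.Ioc_union_Ioi_eq_Ioi hT0.le
  have hintg : IntegrableOn g (Set.Ioi 0) := by
    rw [← hunion]; exact hintg1.union hintg2
  -- step 1: bound by Hbar + g
  have step1 : ∫ s in Set.Ioi (0:ℝ), (Hbar s + C₂ * a * Hbar s ^ γ) / (1 + a * s)
      ≤ (∫ s in Set.Ioi (0:ℝ), Hbar s) + ∫ s in Set.Ioi (0:ℝ), g s := by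
    rw [← integral_add hintH hintg]
    apply integral_mono_of_nonneg
    · filter_upwards [ae_restrict_mem measurableSet_Ioi] with s hs
      have h1 := (hHnonneg s (le_of_lt hs)).1
      have h2 : (0:ℝ) ≤ Hbar s ^ γ := rpow_nonneg h1 γ
      have h3 := hden s hs
      have : (0:ℝ) < 1 + a * s := by linarith
      positivity
    · exact hintH.add hintg
    · filter_upwards [ae_restrict_mem measurableSet_Ioi] with s hs
      have h1 := (hHnonneg s (le_of_lt hs)).1
      have h3 := hden s hs
      calc (Hbar s + C₂ * a * Hbar s ^ γ) / (1 + a * s)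
          = Hbar s / (1 + a * s) + g s := by rw [hg]; ring
        _ ≤ Hbar s + g s := by
            gcongr
            exact div_le_self h1 h3
  -- split the g integral
  have hsplit : ∫ s in Set.Ioi (0:ℝ), g s
      = (∫ s in Set.Ioc (0:ℝ) T, g s) + ∫ s in Set.Ioi T, g s := by
    rw [← hunion, setIntegral_union (Set.Ioc_disjoint_Ioi le_rfl) measurableSet_Ioi
      hintg1 hintg2]
  -- bound on Ioc 0 T
  have hbound1 : ∫ s in Set.Ioc (0:ℝ) T, g s ≤ ε * m / 4 := by
    have h1 : ∫ s in Set.Ioc (0:ℝ) T, g s ≤ ∫ _ in Set.Ioc (0:ℝ) T, C₂ * a := by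
      apply integral_mono_of_nonneg
      · filter_upwards [ae_restrict_mem measurableSet_Ioc] with s hs
        exact hgnn s hs.1
      · exact (integrableOn_const (C := C₂ * a) (hs := measure_Ioc_lt_top.ne))
      · filter_upwards [ae_restrict_mem measurableSet_Ioc] with s hs
        exact hgboundIoc s hs
    have h2 : ∫ _ in Set.Ioc (0:ℝ) T, (C₂ * a : ℝ) = T * (C₂ * a) := by
      rw [setIntegral_const, Real.volume_real_Ioc_of_le hT0.le, smul_eq_mul]
      ring_nf
    have h3 : T * (C₂ * a) ≤ ε * m / 4 := by
      have h5 : a * (4 * C₂ * T) ≤ ε * m := (le_div_iff₀ h4CT).1 ha₀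
      linarith
    linarith
  -- bound on Ioi T
  have hbound2 : ∫ s in Set.Ioi T, g s ≤ ε * m / 4 := by
    have h1 : ∫ s in Set.Ioi T, g s ≤ ∫ s in Set.Ioi T, C₂ * C₁ ^ γ * s ^ (-(1 + β)) := by
      apply integral_mono_of_nonneg
      · filter_upwards [ae_restrict_mem measurableSet_Ioi] with s hs
        exact hgnn s (lt_trans hT0 hs)
      · exact (integrableOn_Ioi_rpow_of_lt (by linarith : -(1 + β) < -1) hT0).const_mul _
      · filter_upwards [ae_restrict_mem measurableSet_Ioi] with s hs
        exact hgboundIoi s hs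
    have h2 : ∫ s in Set.Ioi T, C₂ * C₁ ^ γ * s ^ (-(1 + β)) = K / T ^ β := by
      rw [integral_const_mul,
        integral_Ioi_rpow_of_lt (by linarith : -(1 + β) < -1) hT0]
      rw [show -(1 + β) + 1 = -β by ring, Real.rpow_neg hT0.le, hK]
      field_simp
    linarith [hKT]
  rw [hsplit] at step1
  linarith
end

section
/- Let z be a counting measure on (0,∞) and define z*(s) = ∫_0^∞ φ(s − s') dz(s') where φ is the density with φ(s) = (2/3)·e·b·e^{−bs} for s > 1/b, φ(s) = (2/3)·b²·s for 0 < s ≤ 1/b, φ(s) = 0 for s ≤ 0, b ≥ 2 an integer. Then for all s > 0, z*(s) ≤ b·z*((s,∞)), where z*((s,∞)) = ∫_0^∞ (1 − Φ(s − s')) dz(s') and Φ is the CDF of φ. -/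
open Real MeasureTheory

lemma Phi_nonpos (b : ℤ) (t : ℝ) (ht : t ≤ 0) : Phi b t = 0 := by
  unfold Phi
  rw [setIntegral_congr_fun measurableSet_Iic (g := fun _ => (0:ℝ))
    (fun s hs => by simp only [phi, if_pos (le_trans hs ht)])]
  simp

lemma Phi_mid (b : ℤ) (hb : 2 ≤ b) (t : ℝ) (h0 : 0 < t) (h1 : t ≤ 1 / b) :
    Phi b t = (1 / 3) * (b : ℝ) ^ 2 * t ^ 2 := by
  have hsplit : Set.Iic t = Set.Iic 0 ∪ Set.Ioc 0 t := (Set.Iic_union_Ioc_eq_Iic h0.le).symm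
  have heq : Set.EqOn (phi b) (fun s => (2 / 3) * (b : ℝ) ^ 2 * s) (Set.Ioc 0 t) := by
    intro s hs
    simp only [phi, if_neg (not_le.2 hs.1), if_pos (hs.2.trans h1)]
  have h2 : IntegrableOn (phi b) (Set.Ioc 0 t) := by
    rw [integrableOn_congr_fun heq measurableSet_Ioc]
    exact (by fun_prop : Continuous fun s : ℝ => (2 / 3) * (b : ℝ) ^ 2 * s).integrableOn_Ioc
  have h3 : IntegrableOn (phi b) (Set.Iic 0) := by
    rw [integrableOn_congr_fun (g := fun _ => (0:ℝ))
      (fun s hs => by simp only [phi, if_pos (Set.mem_Iic.mp hs)]) measurableSet_Iic]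
    exact integrableOn_zero
  unfold Phi
  rw [hsplit, setIntegral_union (Set.Iic_disjoint_Ioc le_rfl) measurableSet_Ioc h3 h2,
    setIntegral_congr_fun measurableSet_Iic (g := fun _ => (0:ℝ))
      (fun s hs => by simp only [phi, if_pos (Set.mem_Iic.mp hs)]),
    setIntegral_congr_fun measurableSet_Ioc heq]
  rw [← _root_.intervalIntegral.integral_of_le h0.le]
  rw [_root_.intervalIntegral.integral_const_mul, integral_id]
  simp
  ring

lemma Phi_top (b : ℤ) (hb : 2 ≤ b) (t : ℝ) (h1 : 1 / (b : ℝ) < t) :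
    Phi b t = 1 - (2 / 3) * Real.exp 1 * Real.exp (-(b : ℝ) * t) := by
  have hB : (0:ℝ) < b := by
    have h2 : (2:ℝ) ≤ b := by exact_mod_cast hb
    linarith
  have hiB : 0 < 1 / (b : ℝ) := by positivity
  have hsplit : Set.Iic t = Set.Iic (1 / (b:ℝ)) ∪ Set.Ioc (1 / (b:ℝ)) t :=
    (Set.Iic_union_Ioc_eq_Iic h1.le).symm
  have heq : Set.EqOn (phi b)
      (fun s => (2 / 3) * Real.exp 1 * (b : ℝ) * Real.exp (-(b : ℝ) * s))
      (Set.Ioc (1 / (b:ℝ)) t) := by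
    intro s hs
    simp only [phi, if_neg (not_le.2 (hiB.trans hs.1)), if_neg (not_le.2 hs.1)]
  have h2 : IntegrableOn (phi b) (Set.Ioc (1 / (b:ℝ)) t) := by
    rw [integrableOn_congr_fun heq measurableSet_Ioc]
    exact (by fun_prop :
      Continuous fun s : ℝ => (2 / 3) * Real.exp 1 * (b : ℝ) * Real.exp (-(b : ℝ) * s)).integrableOn_Ioc
  have h3 : IntegrableOn (phi b) (Set.Iic (1 / (b:ℝ))) := by
    rw [show Set.Iic (1 / (b:ℝ)) = Set.Iic 0 ∪ Set.Ioc 0 (1 / (b:ℝ)) from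
      (Set.Iic_union_Ioc_eq_Iic hiB.le).symm]
    apply IntegrableOn.union
    · rw [integrableOn_congr_fun (g := fun _ => (0:ℝ))
        (fun s hs => by simp only [phi, if_pos (Set.mem_Iic.mp hs)]) measurableSet_Iic]
      exact integrableOn_zero
    · rw [integrableOn_congr_fun (g := fun s => (2 / 3) * (b : ℝ) ^ 2 * s)
        (fun s hs => by simp only [phi, if_neg (not_le.2 hs.1), if_pos hs.2]) measurableSet_Ioc]
      exact (by fun_prop : Continuous fun s : ℝ => (2 / 3) * (b : ℝ) ^ 2 * s).integrableOn_Ioc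
  have hPhi_mid : (∫ s' in Set.Iic (1 / (b:ℝ)), phi b s') = 1 / 3 := by
    have h := Phi_mid b hb (1 / (b:ℝ)) hiB le_rfl
    unfold Phi at h
    rw [h]
    field_simp
  have hexp : (∫ x in (1/(b:ℝ))..t, Real.exp (-(b:ℝ) * x))
      = (-(b:ℝ))⁻¹ * (Real.exp (-(b:ℝ)*t) - Real.exp (-1)) := by
    rw [_root_.intervalIntegral.integral_comp_mul_left (fun x => Real.exp x)
      (by simpa using hB.ne' : -(b:ℝ) ≠ 0), integral_exp, smul_eq_mul]
    congr 2
    field_simp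
  unfold Phi
  rw [hsplit, setIntegral_union (Set.Iic_disjoint_Ioc le_rfl) measurableSet_Ioc h3 h2,
    hPhi_mid, setIntegral_congr_fun measurableSet_Ioc heq,
    ← _root_.intervalIntegral.integral_of_le h1.le, _root_.intervalIntegral.integral_const_mul, hexp]
  have hee : Real.exp 1 * Real.exp (-1) = 1 := by
    rw [← Real.exp_add]; simp
  field_simp
  nlinarith [hee]

lemma phi_le (b : ℤ) (hb : 2 ≤ b) (t : ℝ) : phi b t ≤ (b : ℝ) * (1 - Phi b t) := by
  have h2 : (2:ℝ) ≤ b := by exact_mod_cast hb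
  have hB : (0:ℝ) < b := by linarith
  rcases le_or_gt t 0 with h | h
  · rw [Phi_nonpos b t h]
    simp only [phi, if_pos h]
    nlinarith
  · rcases le_or_gt t (1 / (b:ℝ)) with h1 | h1
    · rw [Phi_mid b hb t h h1]
      simp only [phi, if_neg (not_le.2 h), if_pos h1]
      have hu : (b:ℝ) * t ≤ 1 := by
        have := (le_div_iff₀ hB).mp h1
        linarith [this, mul_comm t (b:ℝ)]
      nlinarith [mul_nonneg (sub_nonneg.2 hu) h.le, mul_pos hB h]
    · rw [Phi_top b hb t h1]
      simp only [phi, if_neg (not_le.2 (lt_trans (by positivity) h1 : (0:ℝ) < t)),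
        if_neg (not_le.2 h1)]
      apply le_of_eq
      ring

theorem convolved_density_le_b_mul_tail (b : ℤ) (hb : 2 ≤ b)
    (z : Measure ℝ) [IsLocallyFiniteMeasure z]
    (hz : ∃ (ι : Type) (_ : Countable ι) (p : ι → ℝ),
      (∀ i, 0 < p i) ∧ z = Measure.sum fun i => Measure.dirac (p i)) :
    ∀ s : ℝ, 0 < s →
      ∫⁻ s', ENNReal.ofReal (phi b (s - s')) ∂z
        ≤ ENNReal.ofReal (b : ℝ) * ∫⁻ s', ENNReal.ofReal (1 - Phi b (s - s')) ∂z := by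
  intro s _
  have hB : (0:ℝ) ≤ b := by
    have : (2:ℝ) ≤ b := by exact_mod_cast hb
    linarith
  calc ∫⁻ s', ENNReal.ofReal (phi b (s - s')) ∂z
      ≤ ∫⁻ s', ENNReal.ofReal (b : ℝ) * ENNReal.ofReal (1 - Phi b (s - s')) ∂z := by
        apply lintegral_mono
        intro s'
        dsimp only
        rw [← ENNReal.ofReal_mul hB]
        exact ENNReal.ofReal_le_ofReal (phi_le b hb (s - s'))
    _ = ENNReal.ofReal (b : ℝ) * ∫⁻ s', ENNReal.ofReal (1 - Phi b (s - s')) ∂z :=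
        lintegral_const_mul' _ _ ENNReal.ofReal_ne_top
end
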